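/- arXiv:1606.02943 — 3 statements merged into one kernel-verified Lean document; each statement's English description precedes it below -/
import Mathlib

section
/- Let G be a subgroup of GL(n, ℂ). Set G^s = { A_s : A ∈ G } and G^u = { A_u : A ∈ G }, where A = A_s A_u is the multiplicative Jordan decomposition. Then the subgroup ⟨G^u⟩ generated by G^u is a normal subgroup of the subgroup ⟨G^s, G^u⟩ generated by G^s ∪ G^u. -/
/-- A matrix is diagonalizable if it is conjugate to a diagonal matrix. -/
def IsDiagonalizable {n : ℕ} (M : Matrix (Fin n) (Fin n) ℂ) : Prop :=
  ∃ P : (Matrix (Fin n) (Fin n) ℂ)ˣ, ∃ d : Fin n → ℂ,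
    (↑P⁻¹ : Matrix (Fin n) (Fin n) ℂ) * M * (↑P : Matrix (Fin n) (Fin n) ℂ) = Matrix.diagonal d

/-- A matrix is unipotent if it is the identity plus a nilpotent matrix. -/
def IsUnipotent {n : ℕ} (M : Matrix (Fin n) (Fin n) ℂ) : Prop :=
  IsNilpotent (M - 1)

namespace JordanAux

open Module Module.End Matrix

variable {n : ℕ}

local notation "Mat" => Matrix (Fin n) (Fin n) ℂ

noncomputable abbrev φ : Mat ≃ₐ[ℂ] ((Fin n → ℂ) →ₗ[ℂ] (Fin n → ℂ)) := Matrix.toLinAlgEquiv'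

/-- general lattice lemma for submodules -/
lemma le_of_indep_of_le_of_iSup_top {R M ι : Type*} [Ring R] [AddCommGroup M] [Module R M]
    (E G : ι → Submodule R M) (hind : iSupIndep G) (hle : ∀ i, E i ≤ G i)
    (htop : ⨆ i, E i = ⊤) (i : ι) : G i ≤ E i := by
  classical
  intro x hx
  have hxs : x ∈ ⨆ j, E j := htop ▸ Submodule.mem_top
  rw [Submodule.mem_iSup_iff_exists_finsupp] at hxs
  obtain ⟨f, hf, hsum⟩ := hxs
  have hsplit : (f.sum fun _ xi => xi) = f i + ((f.erase i).sum fun _ xi => xi) := by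
    rw [Finsupp.add_sum_erase' f i (fun _ xi => xi) (fun _ => rfl)]
  have h2 : x - f i ∈ ⨆ (j) (_ : j ≠ i), G j := by
    have : x - f i = ((f.erase i).sum fun _ xi => xi) := by
      rw [← hsum, hsplit]; abel
    rw [this]
    refine Submodule.sum_mem _ fun j hj => ?_
    have hji : j ≠ i := by
      have := Finsupp.support_erase (a := i) (f := f) ▸ hj
      exact Finset.ne_of_mem_erase this
    have : (f.erase i) j = f j := Finsupp.erase_ne hji
    rw [this]
    exact le_iSup₂ (f := fun (j : ι) (_ : j ≠ i) => G j) j hji (hle j (hf j))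
  have h1 : x - f i ∈ G i := sub_mem hx (hle i (hf i))
  have hz : x - f i = 0 :=
    (Submodule.disjoint_def.mp (iSupIndep_def.mp hind i)) _ h1 h2
  have : x = f i := by linear_combination (norm := abel) hz
  rw [this]; exact hf i

lemma eigen_le_maxGen (s u : Mat) (hu : IsUnipotent u) (hc : s * u = u * s) (μ : ℂ) :
    Module.End.eigenspace (φ s) μ ≤ Module.End.maxGenEigenspace (φ (s * u)) μ := by
  obtain ⟨k, hk⟩ := hu
  intro x hx
  set S : Module.End ℂ (Fin n → ℂ) := φ s with hS
  set U : Module.End ℂ (Fin n → ℂ) := φ u with hU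
  have hf : φ (s * u) = S * U := _root_.map_mul _ _ _
  have hUS : S * U = U * S := by rw [← _root_.map_mul, ← _root_.map_mul, hc]
  set g : Module.End ℂ (Fin n → ℂ) := S * U - μ • 1 with hg
  set h : Module.End ℂ (Fin n → ℂ) := U - 1 with hh
  -- basic facts on eigenvectors of S
  have hgy : ∀ y, S y = μ • y → g y = μ • h y := by
    intro y hy
    have : (S * U) y = μ • U y := by
      rw [hUS]; show U (S y) = μ • U y; rw [hy, _root_.map_smul]
    simp only [hg, hh, LinearMap.sub_apply, LinearMap.smul_apply, Module.End.one_apply, this,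
      _root_.map_sub, smul_sub]
  have hSy : ∀ y, S y = μ • y → S (h y) = μ • h y := by
    intro y hy
    have h1 : S (U y) = μ • U y := by
      show (S * U) y = μ • U y
      rw [hUS]; show U (S y) = μ • U y; rw [hy, _root_.map_smul]
    simp only [hh, LinearMap.sub_apply, Module.End.one_apply, _root_.map_sub, h1, hy, smul_sub]
  have key : ∀ j, ∀ y, S y = μ • y →
      (g ^ j) y = μ ^ j • (h ^ j) y ∧ S ((h ^ j) y) = μ • (h ^ j) y := by
    intro j
    induction j with
    | zero => intro y hy; simpa using hy
    | succ j ih =>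
      intro y hy
      obtain ⟨h1, h2⟩ := ih y hy
      set z := (h ^ j) y with hz
      have e1 : (h ^ (j + 1)) y = h z := by rw [pow_succ']; rfl
      have e2 : (g ^ (j + 1)) y = g ((g ^ j) y) := by rw [pow_succ']; rfl
      constructor
      · rw [e2, h1, _root_.map_smul, hgy z h2, e1, smul_smul, pow_succ]
      · rw [e1]; exact hSy z h2
  have hhk : h ^ k = 0 := by
    have : h = φ (u - 1) := by rw [_root_.map_sub, _root_.map_one]
    rw [this, ← _root_.map_pow, hk, _root_.map_zero]
  have hx' : S x = μ • x := mem_eigenspace_iff.mp hx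
  rw [Module.End.mem_maxGenEigenspace]
  refine ⟨k, ?_⟩
  have := (key k x hx').1
  rw [hhk] at this
  simpa [hf, hg] using this

lemma sup_eigen_top (s : Mat) (hs : IsDiagonalizable s) :
    ⨆ μ : ℂ, Module.End.eigenspace (φ s) μ = ⊤ := by
  obtain ⟨P, d, hPd⟩ := hs
  set Q : Mat := (↑P : Mat) with hQ
  set Qi : Mat := (↑P⁻¹ : Mat) with hQi
  have hQQi : Q * Qi = 1 := by rw [hQ, hQi]; exact Units.mul_inv P
  have hsQ : s * Q = Q * Matrix.diagonal d := by
    calc s * Q = 1 * (s * Q) := (one_mul _).symm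
      _ = (Q * Qi) * (s * Q) := by rw [hQQi]
      _ = Q * (Qi * s * Q) := by rw [mul_assoc, ← mul_assoc Qi s Q]
      _ = Q * Matrix.diagonal d := by rw [hPd]
  set c : Fin n → (Fin n → ℂ) := fun i j => Q j i with hc
  have hcol : ∀ i, (φ s) (c i) = d i • c i := by
    intro i
    funext j
    rw [Matrix.toLinAlgEquiv'_apply]
    show (s *ᵥ c i) j = (d i • c i) j
    have : (s *ᵥ c i) j = (s * Q) j i := by
      simp [Matrix.mulVec, Matrix.mul_apply, dotProduct, hc]
    rw [this, hsQ, Matrix.mul_diagonal]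
    simp [hc, mul_comm]
  rw [eq_top_iff]
  intro x _
  have hxdec : x = ∑ i, (Qi *ᵥ x) i • c i := by
    funext j
    have h1 : Q *ᵥ (Qi *ᵥ x) = x := by
      rw [Matrix.mulVec_mulVec, hQQi, Matrix.one_mulVec]
    calc x j = (Q *ᵥ (Qi *ᵥ x)) j := by rw [h1]
      _ = ∑ i, Q j i * (Qi *ᵥ x) i := by
          simp [Matrix.mulVec, dotProduct]
      _ = (∑ i, (Qi *ᵥ x) i • c i) j := by
          rw [Finset.sum_apply]
          exact Finset.sum_congr rfl fun i _ => by simp [hc, mul_comm]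
  rw [hxdec]
  refine Submodule.sum_mem _ fun i _ => ?_
  refine Submodule.mem_iSup_of_mem (d i) ?_
  rw [Module.End.mem_eigenspace_iff, _root_.map_smul, hcol i, smul_comm]

lemma apply_eq_of_mem_maxGen (s u : Mat) (hs : IsDiagonalizable s) (hu : IsUnipotent u)
    (hc : s * u = u * s) {μ : ℂ} {x : Fin n → ℂ}
    (hx : x ∈ Module.End.maxGenEigenspace (φ (s * u)) μ) : (φ s) x = μ • x := by
  have hle := eigen_le_maxGen s u hu hc
  have hind := Module.End.independent_maxGenEigenspace (φ (s * u))
  have htop := sup_eigen_top s hs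
  have := le_of_indep_of_le_of_iSup_top (fun μ => Module.End.eigenspace (φ s) μ)
    (fun μ => Module.End.maxGenEigenspace (φ (s * u)) μ) hind hle htop μ hx
  exact Module.End.mem_eigenspace_iff.mp this

lemma jordan_s_unique (s u s' u' : Mat) (hs : IsDiagonalizable s) (hu : IsUnipotent u)
    (hc : s * u = u * s) (hs' : IsDiagonalizable s') (hu' : IsUnipotent u')
    (hc' : s' * u' = u' * s') (h : s * u = s' * u') : s = s' := by
  apply Matrix.toLinAlgEquiv'.injective
  have htop := Module.End.iSup_maxGenEigenspace_eq_top (φ (s * u))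
  apply LinearMap.ext
  intro x
  have hx : x ∈ ⨆ μ : ℂ, Module.End.maxGenEigenspace (φ (s * u)) μ := htop ▸ Submodule.mem_top
  refine Submodule.iSup_induction (motive := fun x => (φ s) x = (φ s') x)
    (fun μ => Module.End.maxGenEigenspace (φ (s * u)) μ) hx ?_ (by simp) ?_
  · intro μ y hy
    have h1 : (φ s) y = μ • y := apply_eq_of_mem_maxGen s u hs hu hc hy
    have h2 : (φ s') y = μ • y := by
      rw [h] at hy
      exact apply_eq_of_mem_maxGen s' u' hs' hu' hc' hy
    rw [h1, h2]
  · intro a b ha hb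
    rw [_root_.map_add, _root_.map_add, ha, hb]

lemma conj_diag (B s : Matˣ) (h : IsDiagonalizable (↑s : Mat)) :
    IsDiagonalizable (↑(B * s * B⁻¹) : Mat) := by
  obtain ⟨P, d, hP⟩ := h
  refine ⟨B * P, d, ?_⟩
  have key : (B * P)⁻¹ * (B * s * B⁻¹) * (B * P) = P⁻¹ * s * P := by group
  calc (↑(B * P)⁻¹ : Mat) * ↑(B * s * B⁻¹) * ↑(B * P)
      = (↑((B * P)⁻¹ * (B * s * B⁻¹) * (B * P)) : Mat) := by
        simp [Units.val_mul]
    _ = (↑(P⁻¹ * s * P) : Mat) := by rw [key]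
    _ = (↑P⁻¹ : Mat) * ↑s * ↑P := by simp [Units.val_mul]
    _ = Matrix.diagonal d := hP

lemma conj_pow (B : Matˣ) (m : Mat) (k : ℕ) :
    ((↑B : Mat) * m * (↑B⁻¹ : Mat)) ^ k = (↑B : Mat) * m ^ k * (↑B⁻¹ : Mat) := by
  induction k with
  | zero =>
    simp only [pow_zero, mul_one]
    exact (Units.mul_inv B).symm
  | succ k ih =>
    rw [pow_succ, ih, pow_succ]
    have hBi : (↑B⁻¹ : Mat) * (↑B : Mat) = 1 := Units.inv_mul B
    calc (↑B : Mat) * m ^ k * (↑B⁻¹ : Mat) * ((↑B : Mat) * m * (↑B⁻¹ : Mat))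
        = (↑B : Mat) * m ^ k * ((↑B⁻¹ : Mat) * (↑B : Mat)) * m * (↑B⁻¹ : Mat) := by
          simp only [mul_assoc]
      _ = (↑B : Mat) * (m ^ k * m) * (↑B⁻¹ : Mat) := by
          rw [hBi, mul_one]; simp only [mul_assoc]

lemma conj_unip (B u : Matˣ) (h : IsUnipotent (↑u : Mat)) :
    IsUnipotent (↑(B * u * B⁻¹) : Mat) := by
  obtain ⟨k, hk⟩ := h
  refine ⟨k, ?_⟩
  have h1 : (↑(B * u * B⁻¹) : Mat) - 1 = (↑B : Mat) * ((↑u : Mat) - 1) * (↑B⁻¹ : Mat) := by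
    have h0 : (↑(B * u * B⁻¹) : Mat) = (↑B : Mat) * (↑u : Mat) * (↑B⁻¹ : Mat) := by
      simp [Units.val_mul]
    rw [h0, mul_sub, sub_mul, mul_one]
    congr 1
    exact (Units.mul_inv B).symm
  show ((↑(B * u * B⁻¹) : Mat) - 1) ^ k = 0
  rw [h1, conj_pow, hk, mul_zero, zero_mul]

lemma jordan_unique {s u s' u' : Matˣ} (hs : IsDiagonalizable (↑s : Mat))
    (hu : IsUnipotent (↑u : Mat)) (hc : s * u = u * s)
    (hs' : IsDiagonalizable (↑s' : Mat)) (hu' : IsUnipotent (↑u' : Mat))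
    (hc' : s' * u' = u' * s') (h : s * u = s' * u') : s = s' ∧ u = u' := by
  have hm : (↑s : Mat) * (↑u : Mat) = (↑s' : Mat) * (↑u' : Mat) := by
    have := congrArg (Units.val) h; simpa [Units.val_mul] using this
  have hcm : (↑s : Mat) * (↑u : Mat) = (↑u : Mat) * (↑s : Mat) := by
    have := congrArg (Units.val) hc; simpa [Units.val_mul] using this
  have hcm' : (↑s' : Mat) * (↑u' : Mat) = (↑u' : Mat) * (↑s' : Mat) := by
    have := congrArg (Units.val) hc'; simpa [Units.val_mul] using this
  have hss : (↑s : Mat) = ↑s' := jordan_s_unique _ _ _ _ hs hu hcm hs' hu' hcm' hm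
  have hs_eq : s = s' := Units.ext hss
  refine ⟨hs_eq, ?_⟩
  have : s * u = s * u' := by rw [h, hs_eq]
  exact mul_left_cancel this

end JordanAux

/-- `js A` and `ju A` are the semisimple and unipotent parts of the (unique) multiplicative
Jordan decomposition of `A`; the hypotheses characterize them. Then `⟨G^u⟩` is a normal
subgroup of `⟨G^s, G^u⟩`. -/
theorem closure_unipotent_normal_in_closure_ss_unipotent {n : ℕ}
    (js ju : (Matrix (Fin n) (Fin n) ℂ)ˣ → (Matrix (Fin n) (Fin n) ℂ)ˣ)
    (hs : ∀ A, IsDiagonalizable (↑(js A) : Matrix (Fin n) (Fin n) ℂ))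
    (hu : ∀ A, IsUnipotent (↑(ju A) : Matrix (Fin n) (Fin n) ℂ))
    (hcomm : ∀ A, js A * ju A = ju A * js A)
    (hdec : ∀ A, A = js A * ju A)
    (G : Subgroup (Matrix (Fin n) (Fin n) ℂ)ˣ) :
    Subgroup.closure {X | ∃ A ∈ G, X = ju A} ≤
        Subgroup.closure ({X | ∃ A ∈ G, X = js A} ∪ {X | ∃ A ∈ G, X = ju A}) ∧
      ∀ B ∈ Subgroup.closure ({X | ∃ A ∈ G, X = js A} ∪ {X | ∃ A ∈ G, X = ju A}),
        ∀ x ∈ Subgroup.closure {X | ∃ A ∈ G, X = ju A},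
          B * x * B⁻¹ ∈ Subgroup.closure {X | ∃ A ∈ G, X = ju A} := by
  set Su := {X | ∃ A ∈ G, X = ju A} with hSu
  set Ss := {X | ∃ A ∈ G, X = js A} with hSs
  set N := Subgroup.closure Su with hN
  -- equivariance of the Jordan decomposition under conjugation
  have ju_conj : ∀ B C : (Matrix (Fin n) (Fin n) ℂ)ˣ,
      ju (B * C * B⁻¹) = B * ju C * B⁻¹ := by
    intro B C
    have h1 : B * js C * B⁻¹ * (B * ju C * B⁻¹) = B * (js C * ju C) * B⁻¹ := by group
    have h2 : B * ju C * B⁻¹ * (B * js C * B⁻¹) = B * (ju C * js C) * B⁻¹ := by group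
    have hc' : (B * js C * B⁻¹) * (B * ju C * B⁻¹) = (B * ju C * B⁻¹) * (B * js C * B⁻¹) := by
      rw [h1, h2, hcomm]
    have hmain : js (B * C * B⁻¹) * ju (B * C * B⁻¹)
        = (B * js C * B⁻¹) * (B * ju C * B⁻¹) := by
      rw [← hdec (B * C * B⁻¹), h1, ← hdec C]
    exact (JordanAux.jordan_unique (hs _) (hu _) (hcomm _)
      (JordanAux.conj_diag B (js C) (hs C)) (JordanAux.conj_unip B (ju C) (hu C))
      hc' hmain).2
  -- conjugation by elements of G preserves N
  have conjG : ∀ B ∈ G, ∀ x ∈ N, B * x * B⁻¹ ∈ N := by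
    intro B hB x hx
    induction hx using Subgroup.closure_induction with
    | mem y hy =>
      obtain ⟨A, hA, rfl⟩ := hy
      have : B * ju A * B⁻¹ = ju (B * A * B⁻¹) := (ju_conj B A).symm
      rw [this]
      exact Subgroup.subset_closure ⟨B * A * B⁻¹, mul_mem (mul_mem hB hA) (inv_mem hB), rfl⟩
    | one => simpa using one_mem N
    | mul y z hy hz ihy ihz =>
      have : B * (y * z) * B⁻¹ = (B * y * B⁻¹) * (B * z * B⁻¹) := by group
      rw [this]; exact mul_mem ihy ihz
    | inv y hy ihy =>
      have : B * y⁻¹ * B⁻¹ = (B * y * B⁻¹)⁻¹ := by group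
      rw [this]; exact inv_mem ihy
  have hGnorm : ∀ B ∈ G, B ∈ Subgroup.normalizer (N : Set (Matrix (Fin n) (Fin n) ℂ)ˣ) := by
    intro B hB
    rw [Subgroup.mem_normalizer_iff]
    intro x
    constructor
    · exact conjG B hB x
    · intro hx
      have : x = B⁻¹ * (B * x * B⁻¹) * B⁻¹⁻¹ := by group
      rw [this]
      exact conjG B⁻¹ (inv_mem hB) _ hx
  have hnorm : Subgroup.closure (Ss ∪ Su) ≤ Subgroup.normalizer (N : Set (Matrix (Fin n) (Fin n) ℂ)ˣ) := by
    rw [Subgroup.closure_le]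
    rintro X (⟨A, hA, rfl⟩ | hXu)
    · show js A ∈ Subgroup.normalizer (N : Set (Matrix (Fin n) (Fin n) ℂ)ˣ)
      have hXeq : js A = A * (ju A)⁻¹ :=
        eq_mul_inv_iff_mul_eq.mpr (hdec A).symm
      rw [hXeq]
      refine mul_mem (hGnorm A hA) (inv_mem ?_)
      exact Subgroup.le_normalizer (Subgroup.subset_closure ⟨A, hA, rfl⟩)
    · exact Subgroup.le_normalizer (Subgroup.subset_closure hXu)
  refine ⟨Subgroup.closure_mono Set.subset_union_right, ?_⟩
  intro B hB x hx
  exact (Subgroup.mem_normalizer_iff.mp (hnorm hB) x).mp hx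
end

section
/- Let T be a topological group, G a subgroup of T, and H a normal subgroup of G of finite index. Then the topological closure of H is a normal subgroup of the topological closure of G, and the index of the closure of H in the closure of G is finite (at most [G : H]). -/
open Pointwise


theorem closure_of_finite_index_normal {T : Type*} [Group T] [TopologicalSpace T]
    [IsTopologicalGroup T] (G H : Subgroup T) (hHG : H ≤ G)
    (hnorm : ∀ g ∈ G, ∀ h ∈ H, g * h * g⁻¹ ∈ H)
    (hfin : (H.subgroupOf G).index ≠ 0) :
    H.topologicalClosure ≤ G.topologicalClosure ∧
      (∀ g ∈ G.topologicalClosure, ∀ h ∈ H.topologicalClosure,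
        g * h * g⁻¹ ∈ H.topologicalClosure) ∧
      (H.topologicalClosure.subgroupOf G.topologicalClosure).index ≠ 0 ∧
      (H.topologicalClosure.subgroupOf G.topologicalClosure).index ≤
        (H.subgroupOf G).index := by
  have hle : H.topologicalClosure ≤ G.topologicalClosure :=
    closure_mono (fun x hx => hHG hx)
  -- normality of the closure
  have hnorm1 : ∀ g ∈ G, ∀ h ∈ H.topologicalClosure, g * h * g⁻¹ ∈ H.topologicalClosure := by
    intro g hg h hh
    have hcont : Continuous fun x : T => g * x * g⁻¹ := by continuity
    have : (fun x : T => g * x * g⁻¹) '' closure (H : Set T) ⊆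
        closure ((fun x : T => g * x * g⁻¹) '' (H : Set T)) :=
      image_closure_subset_closure_image hcont
    have hsub : (fun x : T => g * x * g⁻¹) '' (H : Set T) ⊆ (H : Set T) := by
      rintro _ ⟨y, hy, rfl⟩; exact hnorm g hg y hy
    have := this ⟨h, hh, rfl⟩
    exact closure_mono hsub this
  have hnorm2 : ∀ g ∈ G.topologicalClosure, ∀ h ∈ H.topologicalClosure,
      g * h * g⁻¹ ∈ H.topologicalClosure := by
    intro g hg h hh
    have hcont : Continuous fun x : T => x * h * x⁻¹ := by continuity
    have : (fun x : T => x * h * x⁻¹) '' closure (G : Set T) ⊆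
        closure ((fun x : T => x * h * x⁻¹) '' (G : Set T)) :=
      image_closure_subset_closure_image hcont
    have hsub : (fun x : T => x * h * x⁻¹) '' (G : Set T) ⊆ closure (H : Set T) := by
      rintro _ ⟨y, hy, rfl⟩; exact hnorm1 y hy h hh
    have := this ⟨g, hg, rfl⟩
    have := closure_mono hsub this
    rwa [closure_closure] at this
  refine ⟨hle, hnorm2, ?_⟩
  -- index bound
  haveI : Finite (G ⧸ H.subgroupOf G) :=
    @Finite.of_fintype _ (Subgroup.fintypeOfIndexNeZero hfin)
  set Q := G ⧸ H.subgroupOf G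
  -- the covering by cosets of representatives
  have hcover : (G.topologicalClosure : Set T) ⊆
      ⋃ q : Q, ((q.out : T) • closure (H : Set T)) := by
    have hclosed : IsClosed (⋃ q : Q, ((q.out : T) • closure (H : Set T))) := by
      apply isClosed_iUnion_of_finite
      intro q
      exact IsClosed.smul isClosed_closure _
    refine closure_minimal ?_ hclosed
    intro g hg
    refine Set.mem_iUnion.2 ⟨QuotientGroup.mk (⟨g, hg⟩ : G), ?_⟩
    have h1 : ((QuotientGroup.mk (⟨g, hg⟩ : G) : Q).out : G)⁻¹ * ⟨g, hg⟩ ∈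
        H.subgroupOf G := by
      rw [← QuotientGroup.eq]
      simp [QuotientGroup.out_eq']
    refine Set.mem_smul_set.2
      ⟨(((((QuotientGroup.mk (⟨g, hg⟩ : G) : Q).out : G))⁻¹ * ⟨g, hg⟩ : G) : T),
        subset_closure (Subgroup.mem_subgroupOf.1 h1), ?_⟩
    push_cast
    simp [smul_eq_mul]
  -- surjection from Q to the quotient of closures
  set B := G.topologicalClosure
  set A' := H.topologicalClosure.subgroupOf B
  have hsurj : Function.Surjective (fun q : Q =>
      (QuotientGroup.mk (⟨((q.out : G) : T), subset_closure (q.out : G).2⟩ : B) : B ⧸ A')) := by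
    intro x
    obtain ⟨b, rfl⟩ := QuotientGroup.mk_surjective x
    obtain ⟨q, hq⟩ := Set.mem_iUnion.1 (hcover b.2)
    obtain ⟨h, hh, hbh⟩ := Set.mem_smul_set.1 hq
    refine ⟨q, ?_⟩
    symm
    rw [QuotientGroup.eq, Subgroup.mem_subgroupOf]
    have hb : (b : T) = (q.out : T) * h := by
      simpa [smul_eq_mul] using hbh.symm
    have : ((b⁻¹ * ⟨((q.out : G) : T), subset_closure (q.out : G).2⟩ : B) : T) = h⁻¹ := by
      simp only [Subgroup.coe_mul, Subgroup.coe_inv, hb]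
      group
    rw [this]
    exact H.topologicalClosure.inv_mem hh
  have hcard : Nat.card (B ⧸ A') ≤ Nat.card Q :=
    Nat.card_le_card_of_surjective _ hsurj
  haveI : Finite (B ⧸ A') := Finite.of_surjective _ hsurj
  constructor
  · exact Subgroup.index_ne_zero_of_finite
  · exact hcard
end

section
/- Every torsion subgroup of the group of invertible upper triangular n×n matrices over ℂ is abelian. -/
open Finset

/-- Diagonal entry of a product of upper triangular matrices. -/
lemma diag_mul_tri {n : ℕ} (M N : Matrix (Fin n) (Fin n) ℂ)
    (hM : ∀ i j : Fin n, j < i → M i j = 0) (hN : ∀ i j : Fin n, j < i → N i j = 0)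
    (i : Fin n) : (M * N) i i = M i i * N i i := by
  rw [Matrix.mul_apply]
  refine Finset.sum_eq_single i (fun k _ hk => ?_) (by simp)
  rcases lt_or_gt_of_ne hk with h | h
  · rw [hM i k h, zero_mul]
  · rw [hN k i h, mul_zero]

/-- Strictly upper triangular matrices are nilpotent. -/
lemma strict_tri_nilpotent {n : ℕ} (N : Matrix (Fin n) (Fin n) ℂ)
    (hN : ∀ i j : Fin n, j ≤ i → N i j = 0) : N ^ n = 0 := by
  have key : ∀ k : ℕ, ∀ i j : Fin n, (j : ℕ) < (i : ℕ) + k → (N ^ k) i j = 0 := by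
    intro k
    induction k with
    | zero =>
      intro i j h
      simp only [Nat.add_zero] at h
      rw [pow_zero, Matrix.one_apply_ne (fun hij => by omega)]
    | succ k ih =>
      intro i j h
      rw [pow_succ, Matrix.mul_apply]
      refine Finset.sum_eq_zero (fun l _ => ?_)
      by_cases hl : (l : ℕ) < (i : ℕ) + k
      · rw [ih i l hl, zero_mul]
      · have : j ≤ l := by
          apply Fin.le_def.mpr; omega
        rw [hN l j this, mul_zero]
  ext i j
  simp only [Matrix.zero_apply]
  exact key n i j (by omega)

/-- A nilpotent matrix `N` with `(1+N)^m = 1`, `m > 0`, is zero. -/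
lemma unipotent_finite_order {n : ℕ} (N : Matrix (Fin n) (Fin n) ℂ)
    (p : ℕ) (hnil : N ^ p = 0) {m : ℕ} (hm : 0 < m) (h : (1 + N) ^ m = 1) : N = 0 := by
  -- each power of (1+N) is 1 + N * something
  have pow_form : ∀ i : ℕ, ∃ R, (1 + N) ^ i = 1 + N * R := by
    intro i
    induction i with
    | zero => exact ⟨0, by simp⟩
    | succ i ih =>
      obtain ⟨R, hR⟩ := ih
      exact ⟨1 + R + R * N, by rw [pow_succ, hR]; noncomm_ring⟩
  -- geometric sum has the form m•1 + N * Q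
  have sum_form : ∀ k : ℕ, ∃ Q, (∑ i ∈ range k, (1 + N) ^ i) = (k : ℂ) • 1 + N * Q := by
    intro k
    induction k with
    | zero => exact ⟨0, by simp⟩
    | succ k ih =>
      obtain ⟨Q, hQ⟩ := ih
      obtain ⟨R, hR⟩ := pow_form k
      refine ⟨Q + R, ?_⟩
      rw [Finset.sum_range_succ, hQ, hR]
      push_cast
      rw [add_smul, one_smul, mul_add]
      abel
  obtain ⟨Q, hQ⟩ := sum_form m
  -- key identity: m • N = -(N * N * Q)
  have hgeom : N * (∑ i ∈ range m, (1 + N) ^ i) = 0 := by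
    have := mul_geom_sum (1 + N) m
    rw [h, add_sub_cancel_left, sub_self] at this
    exact this
  rw [hQ, mul_add, Matrix.mul_smul, mul_one, ← mul_assoc] at hgeom
  have key : (m : ℂ) • N = -(N * N * Q) :=
    eq_neg_of_add_eq_zero_left hgeom
  -- descending induction on nilpotency degree
  have hmC : (m : ℂ) ≠ 0 := Nat.cast_ne_zero.mpr hm.ne'
  have main : ∀ j : ℕ, N ^ (j + 1) = 0 → N = 0 := by
    intro j
    induction j with
    | zero => intro h1; simpa using h1
    | succ j ih =>
      intro h2
      apply ih
      have : (m : ℂ) • N ^ (j + 1) = 0 := by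
        calc (m : ℂ) • N ^ (j + 1) = N ^ j * ((m : ℂ) • N) := by
              rw [Matrix.mul_smul, ← pow_succ]
          _ = -(N ^ (j + 2) * Q) := by
              rw [key]
              rw [mul_neg]
              congr 1
              rw [← mul_assoc, ← mul_assoc, ← pow_succ, ← pow_succ]
          _ = 0 := by rw [h2, zero_mul, neg_zero]
      exact (smul_eq_zero.mp this).resolve_left hmC
  rcases p with _ | p
  · -- N ^ 0 = 0 means 1 = 0, trivial ring
    have h10 : (1 : Matrix (Fin n) (Fin n) ℂ) = 0 := by simpa using hnil
    calc N = N * 1 := (mul_one N).symm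
      _ = 0 := by rw [h10, mul_zero]
  · exact main p hnil

theorem torsion_triangular_subgroup_abelian {n : ℕ}
    (G : Subgroup (Matrix (Fin n) (Fin n) ℂ)ˣ)
    (htri : ∀ A ∈ G, ∀ i j : Fin n, j < i → (↑A : Matrix (Fin n) (Fin n) ℂ) i j = 0)
    (htor : ∀ A ∈ G, ∃ k : ℕ, 0 < k ∧ A ^ k = 1) :
    ∀ A ∈ G, ∀ B ∈ G, A * B = B * A := by
  intro A hA B hB
  -- the commutator
  set C : (Matrix (Fin n) (Fin n) ℂ)ˣ := A * B * A⁻¹ * B⁻¹ with hCdef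
  have hC : C ∈ G := mul_mem (mul_mem (mul_mem hA hB) (inv_mem hA)) (inv_mem hB)
  suffices hC1 : C = 1 by
    have : A * B * A⁻¹ * B⁻¹ = 1 := hC1
    calc A * B = (A * B * A⁻¹ * B⁻¹) * (B * A) := by group
      _ = B * A := by rw [this, one_mul]
  -- matrix of C
  have hAB : A * B ∈ G := mul_mem hA hB
  have hABA : A * B * A⁻¹ ∈ G := mul_mem hAB (inv_mem hA)
  have hAi : A⁻¹ ∈ G := inv_mem hA
  have hBi : B⁻¹ ∈ G := inv_mem hB
  -- diagonal entries of C are 1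
  have hdiag : ∀ i : Fin n, (↑C : Matrix (Fin n) (Fin n) ℂ) i i = 1 := by
    intro i
    have e1 : (↑C : Matrix (Fin n) (Fin n) ℂ) i i
        = (↑(A * B * A⁻¹) : Matrix (Fin n) (Fin n) ℂ) i i * (↑B⁻¹ : Matrix _ _ ℂ) i i := by
      rw [hCdef, Units.val_mul]
      exact diag_mul_tri _ _ (htri _ hABA) (htri _ hBi) i
    have e2 : (↑(A * B * A⁻¹) : Matrix (Fin n) (Fin n) ℂ) i i
        = (↑(A * B) : Matrix (Fin n) (Fin n) ℂ) i i * (↑A⁻¹ : Matrix _ _ ℂ) i i := by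
      rw [Units.val_mul]
      exact diag_mul_tri _ _ (htri _ hAB) (htri _ hAi) i
    have e3 : (↑(A * B) : Matrix (Fin n) (Fin n) ℂ) i i
        = (↑A : Matrix (Fin n) (Fin n) ℂ) i i * (↑B : Matrix _ _ ℂ) i i := by
      rw [Units.val_mul]
      exact diag_mul_tri _ _ (htri _ hA) (htri _ hB) i
    have ea : (↑A : Matrix (Fin n) (Fin n) ℂ) i i * (↑A⁻¹ : Matrix _ _ ℂ) i i = 1 := by
      have : (↑(A * A⁻¹) : Matrix (Fin n) (Fin n) ℂ) i i = 1 := by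
        rw [mul_inv_cancel]; simp [Matrix.one_apply]
      rw [Units.val_mul] at this
      rw [← this]
      exact (diag_mul_tri _ _ (htri _ hA) (htri _ hAi) i).symm
    have eb : (↑B : Matrix (Fin n) (Fin n) ℂ) i i * (↑B⁻¹ : Matrix _ _ ℂ) i i = 1 := by
      have : (↑(B * B⁻¹) : Matrix (Fin n) (Fin n) ℂ) i i = 1 := by
        rw [mul_inv_cancel]; simp [Matrix.one_apply]
      rw [Units.val_mul] at this
      rw [← this]
      exact (diag_mul_tri _ _ (htri _ hB) (htri _ hBi) i).symm
    rw [e1, e2, e3]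
    set a := (↑A : Matrix (Fin n) (Fin n) ℂ) i i
    set a' := (↑A⁻¹ : Matrix (Fin n) (Fin n) ℂ) i i
    set b := (↑B : Matrix (Fin n) (Fin n) ℂ) i i
    set b' := (↑B⁻¹ : Matrix (Fin n) (Fin n) ℂ) i i
    calc a * b * a' * b' = (a * a') * (b * b') := by ring
      _ = 1 := by rw [ea, eb, one_mul]
  -- N := C - 1 is strictly upper triangular
  set Nm : Matrix (Fin n) (Fin n) ℂ := (↑C : Matrix (Fin n) (Fin n) ℂ) - 1 with hNm
  have hstrict : ∀ i j : Fin n, j ≤ i → Nm i j = 0 := by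
    intro i j hij
    rcases eq_or_lt_of_le hij with h | h
    · subst h
      simp [hNm, hdiag, Matrix.one_apply]
    · have hne : i ≠ j := ne_of_gt h
      simp [hNm, htri C hC i j h, Matrix.one_apply, hne]
  have hnil : Nm ^ n = 0 := strict_tri_nilpotent Nm hstrict
  obtain ⟨k, hk, hCk⟩ := htor C hC
  have hCk' : (1 + Nm) ^ k = 1 := by
    have : ((↑C : Matrix (Fin n) (Fin n) ℂ)) ^ k = 1 := by
      rw [← Units.val_pow_eq_pow_val, hCk, Units.val_one]
    rwa [show (1 : Matrix (Fin n) (Fin n) ℂ) + Nm = ↑C by rw [hNm]; abel]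
  have hN0 : Nm = 0 := unipotent_finite_order Nm n hnil hk hCk'
  have : (↑C : Matrix (Fin n) (Fin n) ℂ) = 1 := by
    have := hN0
    rw [hNm, sub_eq_zero] at this
    exact this
  exact Units.ext this
end
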